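/- Let w ∈ ℝⁿ be a nonzero vector and fix L > 0. Then LCD_{L,n}(w/‖w‖₂) ≥ (1/2)·‖w‖₂/‖w‖_∞. In particular, if κ coordinates of w all have absolute value at least ‖w‖_∞/2, then LCD_{L,n}(w/‖w‖₂) ≥ √κ/4. -/

import Mathlib

open MeasureTheory ProbabilityTheory Real
open scoped ENNReal

noncomputable section

namespace Paper

def toE {m : ℕ} (v : Fin m → ℝ) : EuclideanSpace ℝ (Fin m) := WithLp.toLp 2 v

def mulE {m n : ℕ} (M : Matrix (Fin m) (Fin n) ℝ) (x : EuclideanSpace ℝ (Fin n)) :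
    EuclideanSpace ℝ (Fin m) := toE (M.mulVec (fun i => x i))

def opNorm {n : ℕ} (M : Matrix (Fin n) (Fin n) ℝ) : ℝ :=
  sSup {r : ℝ | ∃ x : EuclideanSpace ℝ (Fin n), ‖x‖ = 1 ∧ r = ‖mulE M x‖}

def sMin {n : ℕ} (M : Matrix (Fin n) (Fin n) ℝ) : ℝ :=
  sInf {r : ℝ | ∃ x : EuclideanSpace ℝ (Fin n), ‖x‖ = 1 ∧ r = ‖mulE M x‖}

def suppCard {n : ℕ} (v : EuclideanSpace ℝ (Fin n)) : ℕ := Nat.card {i : Fin n // v i ≠ 0}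

def Comp {n : ℕ} (δ ρ : ℝ) : Set (EuclideanSpace ℝ (Fin n)) :=
  {x | ‖x‖ = 1 ∧ ∃ z : EuclideanSpace ℝ (Fin n), (suppCard z : ℝ) ≤ δ * n ∧ ‖x - z‖ ≤ ρ}

def Incomp {n : ℕ} (δ ρ : ℝ) : Set (EuclideanSpace ℝ (Fin n)) :=
  {x | ‖x‖ = 1 ∧ x ∉ Comp δ ρ}

def logPlus (x : ℝ) : ℝ := max (Real.log x) 0

def LCD {m : ℕ} (L : ℝ) (v : EuclideanSpace ℝ (Fin m)) : ℝ :=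
  sInf {θ : ℝ | 0 < θ ∧ ∃ p : Fin m → ℤ,
    ‖θ • v - toE (fun i => (p i : ℝ))‖ < L * Real.sqrt (logPlus (‖θ • v‖ / L))}

def nzd {m : ℕ} (w : EuclideanSpace ℝ (Fin m)) : EuclideanSpace ℝ (Fin m) := ‖w‖⁻¹ • w

def trunc {n : ℕ} (v : EuclideanSpace ℝ (Fin n)) (σ : Equiv.Perm (Fin n)) (k : ℕ)
    (hk : k ≤ n) : EuclideanSpace ℝ (Fin k) := WithLp.toLp 2 (fun i => v (σ (Fin.castLE hk i)))

def IsOrdering {n : ℕ} (v : EuclideanSpace ℝ (Fin n)) (σ : Equiv.Perm (Fin n)) : Prop :=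
  ∀ i j : Fin n, i ≤ j → |v (σ i)| ≤ |v (σ j)|

def TV {n k : ℕ} (v : EuclideanSpace ℝ (Fin n)) (I : Finset (Fin n)) (h : I.card = k) :
    EuclideanSpace ℝ (Fin k) := WithLp.toLp 2 (fun i => v (I.orderIsoOfFin h i))

def colE {n : ℕ} (A : Matrix (Fin n) (Fin n) ℝ) (l : Fin n) : EuclideanSpace ℝ (Fin n) :=
  WithLp.toLp 2 (fun i => A i l)

def GK {n : ℕ} (K : ℝ) (M : Matrix (Fin n) (Fin n) ℝ) : Set (EuclideanSpace ℝ (Fin n)) :=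
  {v | ‖v‖ ≤ 1 ∧ ‖mulE M v‖ ≤ 2 * K * Real.sqrt n}

def EI {n : ℕ} (I : Finset (Fin n)) : Set (EuclideanSpace ℝ (Fin n)) :=
  {v | ∀ i, i ∉ I → v i = 0}

def IsCenteredSubgUnit (ν : Measure ℝ) : Prop :=
  IsProbabilityMeasure ν ∧ (∫ x, x ∂ν) = 0 ∧ (∫ x, x ^ 2 ∂ν) = 1 ∧
    ∃ B > 0, ∀ t > 0, ν {x : ℝ | t < |x|} ≤ ENNReal.ofReal (2 * Real.exp (-t ^ 2 / B ^ 2))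

def IsIIDEntries {n : ℕ} {Ω : Type} [MeasureSpace Ω] (ν : Measure ℝ)
    (R : Ω → Matrix (Fin n) (Fin n) ℝ) : Prop :=
  (∀ i j, Measurable fun ω => R ω i j) ∧
  (∀ i j, Measure.map (fun ω => R ω i j) ℙ = ν) ∧
  iIndepFun (fun ij : Fin n × Fin n => fun ω => R ω ij.1 ij.2) ℙ


lemma aux_L_sqrt_logPlus_le (L θ : ℝ) (hL : 0 < L) (hθ : 0 < θ) :
    L * Real.sqrt (Paper.logPlus (θ / L)) ≤ θ := by
  set t := θ / L with ht
  have htpos : 0 < t := div_pos hθ hL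
  rcases le_or_gt t 1 with h | h
  · have h0 : Paper.logPlus t = 0 := by
      unfold Paper.logPlus
      exact max_eq_right (Real.log_nonpos htpos.le h)
    rw [h0, Real.sqrt_zero, mul_zero]; exact hθ.le
  · have hlog : Real.log t ≤ t ^ 2 := by
      have h1 : Real.log t ≤ t - 1 := Real.log_le_sub_one_of_pos htpos
      nlinarith
    have hlp : Paper.logPlus t = Real.log t := by
      unfold Paper.logPlus
      exact max_eq_left (Real.log_nonneg h.le)
    rw [hlp]
    have hs : Real.sqrt (Real.log t) ≤ t := by
      calc Real.sqrt (Real.log t) ≤ Real.sqrt (t ^ 2) := Real.sqrt_le_sqrt hlog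
        _ = t := Real.sqrt_sq htpos.le
    calc L * Real.sqrt (Real.log t) ≤ L * t := by nlinarith [Real.sqrt_nonneg (Real.log t)]
      _ = θ := by rw [ht]; field_simp

lemma aux_norm_le_norm {m : ℕ} (a b : EuclideanSpace ℝ (Fin m)) (h : ∀ i, |a i| ≤ |b i|) :
    ‖a‖ ≤ ‖b‖ := by
  rw [EuclideanSpace.norm_eq, EuclideanSpace.norm_eq]
  apply Real.sqrt_le_sqrt
  apply Finset.sum_le_sum
  intro i _
  simp only [Real.norm_eq_abs]
  have := h i
  nlinarith [abs_nonneg (a i), abs_nonneg (b i)]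

theorem simple_lower_bound_lcd {n : ℕ} (L : ℝ) (hL : 0 < L)
    (w : EuclideanSpace ℝ (Fin n)) (hw : w ≠ 0) :
    (1/2) * (‖w‖ / ⨆ i, |w i|) ≤ Paper.LCD L (Paper.nzd w) ∧
    ∀ κ : ℕ, ∀ s : Finset (Fin n), s.card = κ →
      (∀ i ∈ s, (⨆ j, |w j|) / 2 ≤ |w i|) →
      Real.sqrt κ / 4 ≤ Paper.LCD L (Paper.nzd w) := by
  have hnpos : 0 < ‖w‖ := norm_pos_iff.mpr hw
  set M := ⨆ i, |w i| with hMdef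
  have hle : ∀ i, |w i| ≤ M :=
    fun i => le_ciSup (f := fun j => |w j|) (Set.Finite.bddAbove (Set.finite_range _)) i
  have hMpos : 0 < M := by
    have : ∃ i, w i ≠ 0 := by
      by_contra hc
      push_neg at hc
      exact hw (by ext i; simpa using hc i)
    obtain ⟨i, hi⟩ := this
    exact lt_of_lt_of_le (abs_pos.mpr hi) (hle i)
  set v := Paper.nzd w with hvdef
  have hvi : ∀ i, v i = ‖w‖⁻¹ * w i := fun i => rfl
  have hv1 : ‖v‖ = 1 := by
    rw [hvdef, Paper.nzd, norm_smul, norm_inv, norm_norm,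
      inv_mul_cancel₀ hnpos.ne']
  -- the LCD set
  set S : Set ℝ := {θ : ℝ | 0 < θ ∧ ∃ p : Fin n → ℤ,
    ‖θ • v - Paper.toE (fun i => (p i : ℝ))‖ <
      L * Real.sqrt (Paper.logPlus (‖θ • v‖ / L))} with hSdef
  have hLCD : Paper.LCD L v = sInf S := rfl
  have hnorm_smul : ∀ θ : ℝ, 0 < θ → ‖θ • v‖ = θ := by
    intro θ hθ
    rw [norm_smul, hv1, mul_one, Real.norm_eq_abs, abs_of_pos hθ]
  -- every element of S is at least the bound
  have key : ∀ θ ∈ S, (1/2) * (‖w‖ / M) ≤ θ := by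
    rintro θ ⟨hθ, p, hp⟩
    by_contra hcon
    push_neg at hcon
    -- each coordinate |θ * v i| < 1/2
    have hcoord : ∀ i, |θ * v i| < 1/2 := by
      intro i
      have h1 : |θ * v i| = θ * (|w i| / ‖w‖) := by
        rw [hvi i, abs_mul, abs_mul, abs_of_pos hθ, abs_inv, abs_of_pos hnpos]
        ring
      rw [h1]
      have h2 : θ * (|w i| / ‖w‖) ≤ θ * (M / ‖w‖) := by
        gcongr
        exact hle i
      have h3 : θ * (M / ‖w‖) < 1/2 := by
        have e : (1/2 * (‖w‖/M)) * (M/‖w‖) = 1/2 := by field_simp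
        calc θ * (M/‖w‖) < (1/2 * (‖w‖/M)) * (M/‖w‖) :=
              mul_lt_mul_of_pos_right hcon (by positivity)
          _ = 1/2 := e
      linarith
    -- hence the integer point is dominated
    have hdom : ‖θ • v‖ ≤ ‖θ • v - Paper.toE (fun i => (p i : ℝ))‖ := by
      apply aux_norm_le_norm
      intro i
      have hv' : (θ • v) i = θ * v i := rfl
      have hsub : (θ • v - Paper.toE (fun i => (p i : ℝ))) i = θ * v i - (p i : ℝ) := by simp [Paper.toE]
      rw [hv', hsub]
      rcases eq_or_ne (p i) 0 with h0 | h0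
      · simp [h0]
      · have h1 : (1 : ℝ) ≤ |(p i : ℝ)| := by
          rw [← Int.cast_abs]
          exact_mod_cast Int.one_le_abs h0
        have h2 := hcoord i
        have h3 := abs_sub_abs_le_abs_sub ((p i : ℝ)) (θ * v i)
        rw [abs_sub_comm] at h3
        linarith
    have hfin := aux_L_sqrt_logPlus_le L θ hL hθ
    rw [hnorm_smul θ hθ] at hp hdom
    linarith
  -- S is nonempty
  have hne : S.Nonempty := by
    set θ₀ : ℝ := L * Real.exp ((n : ℝ) / L ^ 2 + 1) with hθ₀def
    have hθ₀pos : 0 < θ₀ := mul_pos hL (Real.exp_pos _)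
    refine ⟨θ₀, hθ₀pos, fun i => round (θ₀ * v i), ?_⟩
    have hlog : Paper.logPlus (‖θ₀ • v‖ / L) = (n : ℝ) / L ^ 2 + 1 := by
      rw [hnorm_smul θ₀ hθ₀pos, hθ₀def, mul_comm, mul_div_assoc, div_self hL.ne', mul_one]
      unfold Paper.logPlus
      rw [Real.log_exp]
      apply max_eq_left
      positivity
    rw [hlog]
    have hrhs : L * Real.sqrt ((n : ℝ) / L ^ 2 + 1) = Real.sqrt ((n : ℝ) + L ^ 2) := by
      rw [← Real.sqrt_sq hL.le, ← Real.sqrt_mul (sq_nonneg L)]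
      congr 1
      field_simp
      rw [Real.sq_sqrt (sq_nonneg L)]
    rw [hrhs]
    have hbound : ‖θ₀ • v - Paper.toE (fun i => ((round (θ₀ * v i) : ℤ) : ℝ))‖ ≤
        Real.sqrt ((n : ℝ) * (1/4)) := by
      rw [EuclideanSpace.norm_eq]
      apply Real.sqrt_le_sqrt
      have : ∀ i ∈ Finset.univ (α := Fin n),
          ‖(θ₀ • v - Paper.toE (fun i => ((round (θ₀ * v i) : ℤ) : ℝ))) i‖ ^ 2 ≤ 1/4 := by
        intro i _
        have hsub : (θ₀ • v - Paper.toE (fun i => ((round (θ₀ * v i) : ℤ) : ℝ))) i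
            = θ₀ * v i - (round (θ₀ * v i) : ℝ) := by simp [Paper.toE]
        rw [hsub, Real.norm_eq_abs]
        have := abs_sub_round (θ₀ * v i)
        nlinarith [abs_nonneg (θ₀ * v i - (round (θ₀ * v i) : ℝ))]
      calc ∑ i, ‖(θ₀ • v - Paper.toE (fun i => ((round (θ₀ * v i) : ℤ) : ℝ))) i‖ ^ 2
          ≤ ∑ _i : Fin n, (1/4 : ℝ) := Finset.sum_le_sum this
        _ = (n : ℝ) * (1/4) := by simp [mul_comm]
    have hlt : Real.sqrt ((n : ℝ) * (1/4)) < Real.sqrt ((n : ℝ) + L ^ 2) := by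
      apply Real.sqrt_lt_sqrt (by positivity)
      nlinarith [sq_nonneg L, Nat.cast_nonneg (α := ℝ) n]
    exact lt_of_le_of_lt hbound hlt
  have h1 : (1/2) * (‖w‖ / M) ≤ Paper.LCD L v := by
    rw [hLCD]
    exact le_csInf hne key
  refine ⟨h1, ?_⟩
  intro κ s hcard hs
  have hsum : (κ : ℝ) * (M / 2) ^ 2 ≤ ‖w‖ ^ 2 := by
    have hw2 : ‖w‖ ^ 2 = ∑ i, (w i) ^ 2 := by
      rw [EuclideanSpace.norm_eq, Real.sq_sqrt (by positivity)]
      simp [Real.norm_eq_abs, sq_abs]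
    rw [hw2]
    calc (κ : ℝ) * (M / 2) ^ 2 = ∑ _i ∈ s, (M / 2) ^ 2 := by
          rw [Finset.sum_const, hcard]; ring
      _ ≤ ∑ i ∈ s, (w i) ^ 2 := by
          apply Finset.sum_le_sum
          intro i hi
          have h1 := hs i hi
          have h2 : 0 ≤ M / 2 := by positivity
          nlinarith [abs_nonneg (w i), sq_abs (w i)]
      _ ≤ ∑ i, (w i) ^ 2 := Finset.sum_le_sum_of_subset_of_nonneg
          (Finset.subset_univ s) (fun i _ _ => sq_nonneg _)
  have h2 : Real.sqrt κ / 4 ≤ (1/2) * (‖w‖ / M) := by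
    have hk : Real.sqrt κ ≤ 2 * ‖w‖ / M := by
      have hsq : (κ : ℝ) ≤ (2 * ‖w‖ / M) ^ 2 := by
        rw [div_pow]
        rw [le_div_iff₀ (by positivity)]
        nlinarith
      calc Real.sqrt κ ≤ Real.sqrt ((2 * ‖w‖ / M) ^ 2) := Real.sqrt_le_sqrt hsq
        _ = 2 * ‖w‖ / M := Real.sqrt_sq (by positivity)
    rw [div_le_iff₀ (by norm_num : (0:ℝ) < 4)]
    have e : 1/2 * (‖w‖ / M) * 4 = 2 * ‖w‖ / M := by ring
    rw [e]
    exact hk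
  exact h2.trans h1

end Paper
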